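/- Suppose Σ_j 2^j η_j = ∞ and h̃ = ∞ (i.e. Σ_j 2^{(1−h̲/h)j} η_j < ∞ for every h > 0). Define ρ^h_j = j·2^{h̲ j/h} Σ_{j'>j} 2^{(1−h̲/h)j'} η_{j'−1} (j')². Then ρ^h_j is positive for all j and for every ε > 0, ρ^h_j = o(2^{εj}) as j → ∞. -/
import Mathlib


/-- `ρ^h_j = j 2^{h̲ j/h} Σ_{j' > j} 2^{(1−h̲/h) j'} η_{j'−1} (j')²`. -/
noncomputable def rhoSeq (hlo h : ℝ) (η : ℕ → ℝ) (j : ℕ) : ℝ :=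
  (j : ℝ) * (2:ℝ) ^ (hlo * j / h) *
    ∑' j' : ℕ, if j < j' then (2:ℝ) ^ ((1 - hlo / h) * j') * η (j' - 1) * (j' : ℝ) ^ 2 else 0

private lemma two_rpow_add (x y : ℝ) : (2:ℝ) ^ x * (2:ℝ) ^ y = (2:ℝ) ^ (x + y) :=
  (Real.rpow_add two_pos x y).symm

/-- if `Σ_j 2^j η_j = ∞` but `Σ_j 2^{(1−h̲/h')j} η_j < ∞` for every
`h' > 0` (i.e. `h̃ = ∞`), then `ρ^h_j > 0` for all `j ≥ 1` and `ρ^h_j = o(2^{εj})`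
for every `ε > 0`. -/
theorem stmt16 (hlo h : ℝ) (h0 : 0 < hlo) (hh : hlo < h) (η : ℕ → ℝ) (hη : ∀ j, 0 ≤ η j)
    (hdiv : ¬ Summable fun j : ℕ => (2:ℝ) ^ j * η j)
    (hconv : ∀ h' : ℝ, 0 < h' → Summable fun j : ℕ => (2:ℝ) ^ ((1 - hlo / h') * j) * η j) :
    (∀ j : ℕ, 1 ≤ j → 0 < rhoSeq hlo h η j) ∧
    ∀ ε : ℝ, 0 < ε →
      Filter.Tendsto (fun j : ℕ => rhoSeq hlo h η j / (2:ℝ) ^ (ε * j))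
        Filter.atTop (nhds 0) := by
  have hhpos : (0:ℝ) < h := lt_trans h0 hh
  -- Reformulation of `hconv`: summability of `2^(a j) η j` for every `a < 1`.
  have hA : ∀ a : ℝ, a < 1 → Summable fun j : ℕ => (2:ℝ) ^ (a * (j:ℝ)) * η j := by
    intro a ha
    have h1a : (0:ℝ) < 1 - a := by linarith
    have hpos : (0:ℝ) < hlo / (1 - a) := div_pos h0 h1a
    have := hconv (hlo / (1 - a)) hpos
    have e : 1 - hlo / (hlo / (1 - a)) = a := by
      have h1 : hlo / (hlo / (1 - a)) = 1 - a := by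
        field_simp
      rw [h1]; ring
    simpa only [e] using this
  -- Summability of `2^(a j) η (j-1) j²` for every `a < 1`.
  have hB : ∀ a : ℝ, a < 1 →
      Summable fun j : ℕ => (2:ℝ) ^ (a * (j:ℝ)) * η (j - 1) * (j:ℝ) ^ 2 := by
    intro a ha
    set b : ℝ := (a + 1) / 2 with hb
    have hab : a < b := by rw [hb]; linarith
    have hb1 : b < 1 := by rw [hb]; linarith
    -- summability of `2^(b j) η (j-1)`
    have hg : Summable fun j : ℕ => (2:ℝ) ^ (b * (j:ℝ)) * η (j - 1) := by
      apply (summable_nat_add_iff 1).mp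
      apply Summable.congr ((hA b hb1).mul_left ((2:ℝ) ^ b))
      intro n
      show (2:ℝ) ^ b * ((2:ℝ) ^ (b * (n:ℝ)) * η n) = (2:ℝ) ^ (b * ((n+1 : ℕ):ℝ)) * η (n + 1 - 1)
      rw [Nat.add_sub_cancel]
      push_cast
      rw [mul_add, mul_one, ← two_rpow_add]
      ring
    set r : ℝ := (2:ℝ) ^ (a - b) with hrdef
    have hr0 : 0 < r := Real.rpow_pos_of_pos two_pos _
    have hr1 : r < 1 := Real.rpow_lt_one_of_one_lt_of_neg one_lt_two (by linarith)
    have hrn : ‖r‖ < 1 := by rw [Real.norm_eq_abs, abs_of_pos hr0]; exact hr1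
    have hu : Summable fun n : ℕ => (n:ℝ) ^ 2 * r ^ n :=
      summable_pow_mul_geometric_of_norm_lt_one 2 hrn
    obtain ⟨M, hM⟩ := hu.tendsto_atTop_zero.bddAbove_range
    have hM' : ∀ n : ℕ, (n:ℝ) ^ 2 * r ^ n ≤ M := fun n => hM ⟨n, rfl⟩
    apply Summable.of_nonneg_of_le
      (f := fun j : ℕ => M * ((2:ℝ) ^ (b * (j:ℝ)) * η (j - 1)))
    · intro n
      exact mul_nonneg (mul_nonneg (Real.rpow_pos_of_pos two_pos _).le (hη _)) (sq_nonneg _)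
    · intro n
      have hrw : (2:ℝ) ^ (a * (n:ℝ)) * η (n - 1) * (n:ℝ) ^ 2
          = ((n:ℝ) ^ 2 * r ^ n) * ((2:ℝ) ^ (b * (n:ℝ)) * η (n - 1)) := by
        have : r ^ n = (2:ℝ) ^ ((a - b) * (n:ℝ)) := by
          rw [Real.rpow_mul two_pos.le, Real.rpow_natCast]
        rw [this, mul_comm ((n:ℝ)^2) _]
        rw [show (2:ℝ) ^ ((a-b)*(n:ℝ)) * (n:ℝ)^2 * ((2:ℝ)^(b*(n:ℝ)) * η (n-1))
            = ((2:ℝ) ^ ((a-b)*(n:ℝ)) * (2:ℝ)^(b*(n:ℝ))) * η (n-1) * (n:ℝ)^2 by ring]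
        rw [two_rpow_add]
        congr 2
        ring_nf
      rw [hrw]
      exact mul_le_mul_of_nonneg_right (hM' n)
        (mul_nonneg (Real.rpow_pos_of_pos two_pos _).le (hη _))
    · exact hg.mul_left M
  set a : ℝ := 1 - hlo / h with hadef
  have ha1 : a < 1 := by
    have : 0 < hlo / h := div_pos h0 hhpos
    rw [hadef]; linarith
  -- summability of the tail terms
  have hTsum : ∀ j : ℕ, Summable fun j' : ℕ =>
      if j < j' then (2:ℝ) ^ ((1 - hlo / h) * (j':ℝ)) * η (j' - 1) * (j':ℝ) ^ 2 else 0 := by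
    intro j
    apply Summable.of_nonneg_of_le
      (f := fun j' : ℕ => (2:ℝ) ^ (a * (j':ℝ)) * η (j' - 1) * (j':ℝ) ^ 2)
    · intro n
      split
      · exact mul_nonneg (mul_nonneg (Real.rpow_pos_of_pos two_pos _).le (hη _)) (sq_nonneg _)
      · exact le_refl 0
    · intro n
      split
      · exact le_of_eq (by rw [hadef])
      · exact mul_nonneg (mul_nonneg (Real.rpow_pos_of_pos two_pos _).le (hη _)) (sq_nonneg _)
    · exact hB a ha1
  have htermnn : ∀ j j' : ℕ,
      0 ≤ (if j < j' then (2:ℝ) ^ ((1 - hlo / h) * (j':ℝ)) * η (j' - 1) * (j':ℝ) ^ 2 else 0) := by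
    intro j n
    split
    · exact mul_nonneg (mul_nonneg (Real.rpow_pos_of_pos two_pos _).le (hη _)) (sq_nonneg _)
    · exact le_refl 0
  constructor
  · -- positivity
    intro j hj
    -- there is some `k ≥ j` with `η k > 0`
    have hex : ∃ k, j ≤ k ∧ 0 < η k := by
      by_contra hc
      push_neg at hc
      apply hdiv
      apply (summable_nat_add_iff j).mp
      have hzero : (fun n : ℕ => (2:ℝ) ^ (n + j) * η (n + j)) = fun _ => (0:ℝ) := by
        funext n
        have : η (n + j) = 0 := le_antisymm (hc (n + j) (Nat.le_add_left _ _)) (hη _)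
        simp [this]
      rw [hzero]
      exact summable_zero
    obtain ⟨k, hk, hkpos⟩ := hex
    have hjk : j < k + 1 := Nat.lt_succ_of_le hk
    unfold rhoSeq
    apply mul_pos (mul_pos _ (Real.rpow_pos_of_pos two_pos _))
    · apply Summable.tsum_pos (hTsum j) (htermnn j) (k + 1)
      rw [if_pos hjk]
      have : (k + 1 : ℕ) - 1 = k := by omega
      rw [this]
      apply mul_pos (mul_pos (Real.rpow_pos_of_pos two_pos _) hkpos)
      positivity
    · exact_mod_cast Nat.lt_of_lt_of_le Nat.zero_lt_one hj
  · -- decay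
    intro ε hε
    set a' : ℝ := 1 - min ε (1 - a) / 2 with ha'def
    have hmin : 0 < min ε (1 - a) := lt_min hε (by linarith)
    have hhalf : min ε (1 - a) / 2 < 1 - a :=
      lt_of_lt_of_le (half_lt_self hmin) (min_le_right _ _)
    have haa' : a < a' := by
      rw [ha'def, lt_sub_comm]; exact hhalf
    have ha'1 : a' < 1 := by rw [ha'def]; linarith
    have ha'ε : 1 - a' < ε := by
      have : min ε (1 - a) / 2 < ε := by
        have := min_le_left ε (1 - a); linarith
      rw [ha'def]; linarith
    set S : ℝ := ∑' j : ℕ, (2:ℝ) ^ (a' * (j:ℝ)) * η (j - 1) * (j:ℝ) ^ 2 with hSdef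
    have hS : Summable fun j : ℕ => (2:ℝ) ^ (a' * (j:ℝ)) * η (j - 1) * (j:ℝ) ^ 2 := hB a' ha'1
    have hSnn : 0 ≤ S := tsum_nonneg fun n =>
      mul_nonneg (mul_nonneg (Real.rpow_pos_of_pos two_pos _).le (hη _)) (sq_nonneg _)
    set q : ℝ := (2:ℝ) ^ (1 - a' - ε) with hqdef
    have hq0 : 0 < q := Real.rpow_pos_of_pos two_pos _
    have hq1 : q < 1 := Real.rpow_lt_one_of_one_lt_of_neg one_lt_two (by linarith)
    -- tail bound
    have hT : ∀ j : ℕ,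
        (∑' j' : ℕ, if j < j' then (2:ℝ) ^ ((1 - hlo / h) * (j':ℝ)) * η (j' - 1) * (j':ℝ) ^ 2 else 0)
          ≤ (2:ℝ) ^ ((a - a') * (j:ℝ)) * S := by
      intro j
      have hle : ∀ j' : ℕ,
          (if j < j' then (2:ℝ) ^ ((1 - hlo / h) * (j':ℝ)) * η (j' - 1) * (j':ℝ) ^ 2 else 0)
            ≤ (2:ℝ) ^ ((a - a') * (j:ℝ)) * ((2:ℝ) ^ (a' * (j':ℝ)) * η (j' - 1) * (j':ℝ) ^ 2) := by
        intro j'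
        split
        · rename_i hjj'
          have h1 : (2:ℝ) ^ ((1 - hlo / h) * (j':ℝ)) * η (j' - 1) * (j':ℝ) ^ 2
              = (2:ℝ) ^ ((a - a') * (j':ℝ)) * ((2:ℝ) ^ (a' * (j':ℝ)) * η (j' - 1) * (j':ℝ) ^ 2) := by
            rw [show (2:ℝ) ^ ((a-a')*(j':ℝ)) * ((2:ℝ)^(a'*(j':ℝ)) * η (j'-1) * (j':ℝ)^2)
                = ((2:ℝ) ^ ((a-a')*(j':ℝ)) * (2:ℝ)^(a'*(j':ℝ))) * η (j'-1) * (j':ℝ)^2 by ring]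
            rw [two_rpow_add]
            congr 2
            rw [hadef]; ring_nf
          rw [h1]
          apply mul_le_mul_of_nonneg_right
          · apply Real.rpow_le_rpow_of_exponent_le one_le_two
            apply mul_le_mul_of_nonpos_left _ (by linarith : a - a' ≤ 0)
            exact_mod_cast le_of_lt hjj'
          · exact mul_nonneg (mul_nonneg (Real.rpow_pos_of_pos two_pos _).le (hη _)) (sq_nonneg _)
        · exact mul_nonneg (Real.rpow_pos_of_pos two_pos _).le
            (mul_nonneg (mul_nonneg (Real.rpow_pos_of_pos two_pos _).le (hη _)) (sq_nonneg _))
      calc (∑' j' : ℕ, if j < j' then (2:ℝ) ^ ((1 - hlo / h) * (j':ℝ)) * η (j' - 1) * (j':ℝ) ^ 2 else 0)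
          ≤ ∑' j' : ℕ, (2:ℝ) ^ ((a - a') * (j:ℝ)) * ((2:ℝ) ^ (a' * (j':ℝ)) * η (j' - 1) * (j':ℝ) ^ 2) :=
            Summable.tsum_le_tsum hle (hTsum j) (hS.mul_left _)
        _ = (2:ℝ) ^ ((a - a') * (j:ℝ)) * S := by rw [hSdef, tsum_mul_left]
    -- the main bound
    have hbound : ∀ j : ℕ, rhoSeq hlo h η j / (2:ℝ) ^ (ε * (j:ℝ)) ≤ S * ((j:ℝ) * q ^ j) := by
      intro j
      rw [div_le_iff₀ (Real.rpow_pos_of_pos two_pos _)]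
      unfold rhoSeq
      have hq' : q ^ j = (2:ℝ) ^ ((1 - a' - ε) * (j:ℝ)) := by
        rw [hqdef, ← Real.rpow_natCast ((2:ℝ) ^ (1 - a' - ε)) j, ← Real.rpow_mul two_pos.le]
      calc (j:ℝ) * (2:ℝ) ^ (hlo * (j:ℝ) / h) *
            (∑' j' : ℕ, if j < j' then (2:ℝ) ^ ((1 - hlo / h) * (j':ℝ)) * η (j' - 1) * (j':ℝ) ^ 2 else 0)
          ≤ (j:ℝ) * (2:ℝ) ^ (hlo * (j:ℝ) / h) * ((2:ℝ) ^ ((a - a') * (j:ℝ)) * S) := by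
            apply mul_le_mul_of_nonneg_left (hT j)
            exact mul_nonneg (Nat.cast_nonneg j) (Real.rpow_pos_of_pos two_pos _).le
        _ = S * ((j:ℝ) * q ^ j) * (2:ℝ) ^ (ε * (j:ℝ)) := by
            rw [hq']
            rw [show (j:ℝ) * (2:ℝ) ^ (hlo*(j:ℝ)/h) * ((2:ℝ) ^ ((a-a')*(j:ℝ)) * S)
                = S * (j:ℝ) * ((2:ℝ) ^ (hlo*(j:ℝ)/h) * (2:ℝ) ^ ((a-a')*(j:ℝ))) by ring]
            rw [show S * ((j:ℝ) * (2:ℝ) ^ ((1-a'-ε)*(j:ℝ))) * (2:ℝ) ^ (ε*(j:ℝ))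
                = S * (j:ℝ) * ((2:ℝ) ^ ((1-a'-ε)*(j:ℝ)) * (2:ℝ) ^ (ε*(j:ℝ))) by ring]
            rw [two_rpow_add, two_rpow_add]
            congr 2
            rw [hadef]; field_simp; ring
    have hnn : ∀ j : ℕ, 0 ≤ rhoSeq hlo h η j / (2:ℝ) ^ (ε * (j:ℝ)) := by
      intro j
      apply div_nonneg _ (Real.rpow_pos_of_pos two_pos _).le
      unfold rhoSeq
      apply mul_nonneg (mul_nonneg (Nat.cast_nonneg j) (Real.rpow_pos_of_pos two_pos _).le)
      exact tsum_nonneg (htermnn j)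
    have hlim : Filter.Tendsto (fun j : ℕ => S * ((j:ℝ) * q ^ j)) Filter.atTop (nhds 0) := by
      have := (tendsto_self_mul_const_pow_of_lt_one hq0.le hq1).const_mul S
      simpa using this
    exact squeeze_zero hnn hbound hlim
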